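/- Let n, d, d', λ be positive integers with λ ≥ 2, let m be an integer with 0 ≤ m ≤ min(d, d') − 1, and set κ = gcd(d, d', n). Let Γ be a finite additive abelian group whose order divides n and H' a subgroup of Γ. Let X be a finite set and let c assign to each unordered pair of distinct elements of X an element of the quotient group Γ/H'; for A ⊆ X and w ∈ X \ A write c(A, w) = Σ_{a ∈ A} c({a, w}). Suppose that: (a) for every A ⊆ X with |A| = d, the set {c(A, w) : w ∈ X \ A} has at most λ − 1 elements; (b) for every A ⊆ X with |A| = d', the set {c(A, w) : w ∈ X \ A} has at most λ − 1 elements; (c) for all U, V ⊆ X with |U| = d − 1, |V| = d' − 1 and |U ∩ V| = m, the set {c(U, w) + c({w, w'}) + c(V, w') : w, w' ∈ X \ (U ∪ V), w ≠ w'} has at most λ − 1 elements. Then there exist a subset I ⊆ X, a subset S ⊆ Γ with |S| ≤ λ − 1, and a map C' : I → Γ such that: (1) (|I| + d + d') · (λ − 1)^{d + d'} ≥ |X|; (2) κ · C'(x) ∈ H' for every x ∈ I; and (3) for all distinct x, y ∈ I there exists s ∈ S such that c({x, y}) equals the image of s + C'(x) + C'(y) under the quotient map Γ → Γ/H'. 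-/

import Mathlib

open scoped Classical

/-- Core structural lemma: if a quotient colouring of the pairs of a finite set `X`
admits no `(d,λ)`-, `(d',λ)`- or `(d,d',m,λ)`-gadget, then there are a large set
`I ⊆ X`, a set `S ⊆ Γ` with at most `λ - 1` elements, and a vertex colouring
`C' : I → Γ` with `κ·C'(x) ∈ H'`, such that every pair colour on `I` is
`s + C'(x) + C'(y) + H'` for some `s ∈ S`. -/
theorem stmt_3 (n d d' lam m : ℕ) (hn : 0 < n) (hd : 0 < d) (hd' : 0 < d')
    (hlam : 2 ≤ lam) (hm : m + 1 ≤ min d d')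
    (κ : ℕ) (hκ : κ = Nat.gcd d (Nat.gcd d' n))
    (Γ : Type*) [AddCommGroup Γ] [Fintype Γ] (hΓ : Fintype.card Γ ∣ n)
    (H' : AddSubgroup Γ)
    (X : Type*) [Fintype X] [DecidableEq X]
    (c : Sym2 X → Γ ⧸ H')
    -- (a): no (d, λ)-gadget
    (ha : ∀ A : Finset X, A.card = d →
      ((Finset.univ \ A).image (fun w => ∑ u ∈ A, c s(u, w))).card ≤ lam - 1)
    -- (b): no (d', λ)-gadget
    (hb : ∀ A : Finset X, A.card = d' →
      ((Finset.univ \ A).image (fun w => ∑ u ∈ A, c s(u, w))).card ≤ lam - 1)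
    -- (c): no (d, d', m, λ)-gadget
    (hc : ∀ U W : Finset X, U.card = d - 1 → W.card = d' - 1 → (U ∩ W).card = m →
      ((((Finset.univ \ (U ∪ W)) ×ˢ (Finset.univ \ (U ∪ W))).filter
          (fun p : X × X => p.1 ≠ p.2)).image
        (fun p : X × X => (∑ u ∈ U, c s(u, p.1)) + c s(p.1, p.2) +
          ∑ w ∈ W, c s(w, p.2))).card ≤ lam - 1) :
    ∃ (I : Finset X) (S : Finset Γ) (C' : X → Γ),
      S.card ≤ lam - 1 ∧
      Fintype.card X ≤ (I.card + d + d') * (lam - 1) ^ (d + d') ∧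
      (∀ x ∈ I, κ • C' x ∈ H') ∧
      (∀ x ∈ I, ∀ y ∈ I, x ≠ y →
        ∃ sc ∈ S, c s(x, y) = QuotientAddGroup.mk (sc + C' x + C' y)) := by
  -- classical
  have hmd : m + 1 ≤ d := le_trans hm (Nat.min_le_left _ _)
  have hmd' : m + 1 ≤ d' := le_trans hm (Nat.min_le_right _ _)
  have htriv : Fintype.card X ≤ d + d' →
      ∃ (I : Finset X) (S : Finset Γ) (C' : X → Γ),
      S.card ≤ lam - 1 ∧
      Fintype.card X ≤ (I.card + d + d') * (lam - 1) ^ (d + d') ∧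
      (∀ x ∈ I, κ • C' x ∈ H') ∧
      (∀ x ∈ I, ∀ y ∈ I, x ≠ y →
        ∃ sc ∈ S, c s(x, y) = QuotientAddGroup.mk (sc + C' x + C' y)) := by
    intro h
    refine ⟨∅, ∅, fun _ => 0, by simp, ?_, by simp, by simp⟩
    calc Fintype.card X ≤ d + d' := h
      _ ≤ (d + d') * (lam - 1) ^ (d + d') :=
          Nat.le_mul_of_pos_right _ (Nat.pow_pos (by omega))
      _ = ((∅ : Finset X).card + d + d') * (lam - 1) ^ (d + d') := by simp
  by_cases hbig : d + d' ≤ Fintype.card X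
  swap
  · exact htriv (by omega)
  obtain ⟨L, -, hL⟩ := Finset.exists_subset_card_eq
    (show d + d' ≤ (Finset.univ : Finset X).card by simpa using hbig)
  obtain ⟨M, hML, hMc⟩ := Finset.exists_subset_card_eq (show m ≤ L.card by rw [hL]; omega)
  obtain ⟨Ur, hUrs, hUrc⟩ := Finset.exists_subset_card_eq
    (show d - 1 - m ≤ (L \ M).card by rw [Finset.card_sdiff_of_subset hML, hL, hMc]; omega)
  obtain ⟨Wr, hWrs, hWrc⟩ := Finset.exists_subset_card_eq
    (show d' - 1 - m ≤ ((L \ M) \ Ur).card by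
      rw [Finset.card_sdiff_of_subset hUrs, Finset.card_sdiff_of_subset hML, hL, hMc, hUrc]; omega)
  obtain ⟨M3, hM3s, hM3c⟩ := Finset.exists_subset_card_eq
    (show m ≤ (((L \ M) \ Ur) \ Wr).card by
      rw [Finset.card_sdiff_of_subset hWrs, Finset.card_sdiff_of_subset hUrs, Finset.card_sdiff_of_subset hML,
        hL, hMc, hUrc, hWrc]; omega)
  have hA5 : ((((L \ M) \ Ur) \ Wr) \ M3).card = 2 := by
    rw [Finset.card_sdiff_of_subset hM3s, Finset.card_sdiff_of_subset hWrs, Finset.card_sdiff_of_subset hUrs,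
      Finset.card_sdiff_of_subset hML, hL, hMc, hUrc, hWrc, hM3c]; omega
  obtain ⟨x0, ystar, hxys, hA5'⟩ := Finset.card_eq_two.mp hA5
  have hx0mem : x0 ∈ (((L \ M) \ Ur) \ Wr) \ M3 := by rw [hA5']; simp
  have hysmem : ystar ∈ (((L \ M) \ Ur) \ Wr) \ M3 := by rw [hA5']; simp
  simp only [Finset.mem_sdiff] at hx0mem hysmem
  obtain ⟨⟨⟨⟨hx0L, hx0M⟩, hx0Ur⟩, hx0Wr⟩, hx0M3⟩ := hx0mem
  obtain ⟨⟨⟨⟨hysL, hysM⟩, hysUr⟩, hysWr⟩, hysM3⟩ := hysmem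
  have hUrf : ∀ {y}, y ∈ Ur → y ∈ L ∧ y ∉ M := fun hy => by
    have := hUrs hy; simp only [Finset.mem_sdiff] at this; exact this
  have hWrf : ∀ {y}, y ∈ Wr → (y ∈ L ∧ y ∉ M) ∧ y ∉ Ur := fun hy => by
    have := hWrs hy; simp only [Finset.mem_sdiff] at this; exact this
  have hM3f : ∀ {y}, y ∈ M3 → ((y ∈ L ∧ y ∉ M) ∧ y ∉ Ur) ∧ y ∉ Wr := fun hy => by
    have := hM3s hy; simp only [Finset.mem_sdiff] at this; exact this
  set U1 : Finset X := M ∪ Ur with hU1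
  set W1 : Finset X := M ∪ Wr with hW1
  set U3 : Finset X := M3 ∪ Ur with hU3
  set W2 : Finset X := M3 ∪ Wr with hW2
  have hdMUr : Disjoint M Ur := Finset.disjoint_left.mpr fun a ha' ha'' => (hUrf ha'').2 ha'
  have hdMWr : Disjoint M Wr := Finset.disjoint_left.mpr fun a ha' ha'' => (hWrf ha'').1.2 ha'
  have hdM3Ur : Disjoint M3 Ur := Finset.disjoint_left.mpr fun a ha' ha'' => (hM3f ha').1.2 ha''
  have hdM3Wr : Disjoint M3 Wr := Finset.disjoint_left.mpr fun a ha' ha'' => (hM3f ha').2 ha''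
  have hU1c : U1.card = d - 1 := by
    rw [hU1, Finset.card_union_of_disjoint hdMUr, hMc, hUrc]; omega
  have hW1c : W1.card = d' - 1 := by
    rw [hW1, Finset.card_union_of_disjoint hdMWr, hMc, hWrc]; omega
  have hU3c : U3.card = d - 1 := by
    rw [hU3, Finset.card_union_of_disjoint hdM3Ur, hM3c, hUrc]; omega
  have hW2c : W2.card = d' - 1 := by
    rw [hW2, Finset.card_union_of_disjoint hdM3Wr, hM3c, hWrc]; omega
  have hU1L : U1 ⊆ L := Finset.union_subset hML (fun y hy => (hUrf hy).1)
  have hW1L : W1 ⊆ L := Finset.union_subset hML (fun y hy => (hWrf hy).1.1)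
  have hU3L : U3 ⊆ L := Finset.union_subset (fun y hy => (hM3f hy).1.1.1) (fun y hy => (hUrf hy).1)
  have hW2L : W2 ⊆ L := Finset.union_subset (fun y hy => (hM3f hy).1.1.1) (fun y hy => (hWrf hy).1.1)
  have hU1W1 : U1 ∩ W1 = M := by
    ext a
    simp only [hU1, hW1, Finset.mem_inter, Finset.mem_union]
    constructor
    · rintro ⟨h1 | h1, h2 | h2⟩
      · exact h1
      · exact h1
      · exact h2
      · exact absurd h1 (hWrf h2).2
    · intro h; exact ⟨Or.inl h, Or.inl h⟩
  have hU3W2 : U3 ∩ W2 = M3 := by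
    ext a
    simp only [hU3, hW2, Finset.mem_inter, Finset.mem_union]
    constructor
    · rintro ⟨h1 | h1, h2 | h2⟩
      · exact h1
      · exact h1
      · exact h2
      · exact absurd h1 (hWrf h2).2
    · intro h; exact ⟨Or.inl h, Or.inl h⟩
  have hx0U1 : x0 ∉ U1 := by
    rw [hU1]; exact fun h => (Finset.mem_union.mp h).elim hx0M hx0Ur
  have hx0W1 : x0 ∉ W1 := by
    rw [hW1]; exact fun h => (Finset.mem_union.mp h).elim hx0M hx0Wr
  have hx0U3 : x0 ∉ U3 := by
    rw [hU3]; exact fun h => (Finset.mem_union.mp h).elim hx0M3 hx0Ur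
  have hysU1 : ystar ∉ U1 := by
    rw [hU1]; exact fun h => (Finset.mem_union.mp h).elim hysM hysUr
  have hysW1 : ystar ∉ W1 := by
    rw [hW1]; exact fun h => (Finset.mem_union.mp h).elim hysM hysWr
  set UW : Finset X := U1 ∪ W1 with hUW
  have hUWc : UW.card = d + d' - 2 - m := by
    have h := Finset.card_union_add_card_inter U1 W1
    rw [hU1W1, hU1c, hW1c, hMc, ← hUW] at h
    omega
  set alf : X → Γ ⧸ H' := fun w => ∑ u ∈ insert x0 U1, c s(u, w) with half
  set bet : X → Γ ⧸ H' := fun w => ∑ u ∈ insert x0 W1, c s(u, w) with hbet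
  set gam : X → Γ ⧸ H' := fun w =>
    if m = 0 then 0 else ∑ u ∈ insert x0 U3, c s(u, w) with hgam
  set VV : X → Finset X := fun y => if y ∈ M then U3 else if y ∈ Ur then W1 else U1 with hVV
  set tau : X → X → Γ ⧸ H' := fun y w => (∑ u ∈ VV y, c s(u, w)) + c s(w, y) with htau
  set s0 : Finset X := Finset.univ \ L with hs0
  have hαcard : (s0.image alf).card ≤ lam - 1 := by
    have hsub : s0.image alf ⊆ (Finset.univ \ insert x0 U1).image alf :=
      Finset.image_subset_image
        (Finset.sdiff_subset_sdiff (le_refl _) (Finset.insert_subset hx0L hU1L))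
    refine le_trans (Finset.card_le_card hsub) ?_
    exact ha (insert x0 U1) (by rw [Finset.card_insert_of_notMem hx0U1, hU1c]; omega)
  have hβcard : (s0.image bet).card ≤ lam - 1 := by
    have hsub : s0.image bet ⊆ (Finset.univ \ insert x0 W1).image bet :=
      Finset.image_subset_image
        (Finset.sdiff_subset_sdiff (le_refl _) (Finset.insert_subset hx0L hW1L))
    refine le_trans (Finset.card_le_card hsub) ?_
    exact hb (insert x0 W1) (by rw [Finset.card_insert_of_notMem hx0W1, hW1c]; omega)
  have hγcard1 : m ≠ 0 → (s0.image gam).card ≤ lam - 1 := by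
    intro hm0
    have hg : gam = fun w => ∑ u ∈ insert x0 U3, c s(u, w) := by
      funext w; rw [hgam]; simp [hm0]
    rw [hg]
    have hsub : s0.image (fun w => ∑ u ∈ insert x0 U3, c s(u, w)) ⊆
        (Finset.univ \ insert x0 U3).image (fun w => ∑ u ∈ insert x0 U3, c s(u, w)) :=
      Finset.image_subset_image
        (Finset.sdiff_subset_sdiff (le_refl _) (Finset.insert_subset hx0L hU3L))
    refine le_trans (Finset.card_le_card hsub) ?_
    exact ha (insert x0 U3) (by rw [Finset.card_insert_of_notMem hx0U3, hU3c]; omega)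
  have hγcard0 : m = 0 → (s0.image gam).card ≤ 1 := by
    intro hm0
    have hsub : s0.image gam ⊆ {0} := by
      intro q hq
      obtain ⟨w, -, rfl⟩ := Finset.mem_image.mp hq
      rw [hgam]; simp [hm0]
    exact le_trans (Finset.card_le_card hsub) (by simp)
  have hτcard : ∀ y, y ∈ UW → (s0.image (tau y)).card ≤ lam - 1 := by
    intro y hy
    have hyLoc : y ∈ M ∨ y ∈ Ur ∨ y ∈ Wr := by
      rw [hUW, hU1, hW1] at hy
      rcases Finset.mem_union.mp hy with h | h
      · rcases Finset.mem_union.mp h with h' | h'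
        · exact Or.inl h'
        · exact Or.inr (Or.inl h')
      · rcases Finset.mem_union.mp h with h' | h'
        · exact Or.inl h'
        · exact Or.inr (Or.inr h')
    have key : ∀ (Up Wp : Finset X) (sh : Γ ⧸ H') (P : X → X × X),
        Up.card = d - 1 → Wp.card = d' - 1 → (Up ∩ Wp).card = m →
        (∀ w ∈ s0, P w ∈ ((Finset.univ \ (Up ∪ Wp)) ×ˢ (Finset.univ \ (Up ∪ Wp))).filter
            (fun p : X × X => p.1 ≠ p.2)) →
        (∀ w ∈ s0, tau y w = ((∑ u ∈ Up, c s(u, (P w).1)) + c s((P w).1, (P w).2) +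
            ∑ v ∈ Wp, c s(v, (P w).2)) - sh) →
        (s0.image (tau y)).card ≤ lam - 1 := by
      intro Up Wp sh P h1 h2 h3 hmem heq
      have hsub : s0.image (tau y) ⊆
          ((((Finset.univ \ (Up ∪ Wp)) ×ˢ (Finset.univ \ (Up ∪ Wp))).filter
            (fun p : X × X => p.1 ≠ p.2)).image
            (fun p : X × X => (∑ u ∈ Up, c s(u, p.1)) + c s(p.1, p.2) +
              ∑ v ∈ Wp, c s(v, p.2))).image (fun E => E - sh) := by
        intro q hq
        obtain ⟨w, hw, rfl⟩ := Finset.mem_image.mp hq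
        exact Finset.mem_image.mpr ⟨_, Finset.mem_image.mpr ⟨P w, hmem w hw, rfl⟩,
          (heq w hw).symm⟩
      exact le_trans (Finset.card_le_card hsub)
        (le_trans Finset.card_image_le (hc Up Wp h1 h2 h3))
    rcases hyLoc with hyM | hyUr | hyWr
    · -- y ∈ M : use the pair (U3, W2)
      have hyL : y ∈ L := hML hyM
      have hyU3 : y ∉ U3 := by
        rw [hU3]; simp only [Finset.mem_union]
        rintro (h | h)
        · exact (hM3f h).1.1.2 hyM
        · exact (hUrf h).2 hyM
      have hyW2 : y ∉ W2 := by
        rw [hW2]; simp only [Finset.mem_union]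
        rintro (h | h)
        · exact (hM3f h).1.1.2 hyM
        · exact (hWrf h).1.2 hyM
      refine key U3 W2 (∑ v ∈ W2, c s(v, y)) (fun w => (w, y)) hU3c hW2c
        (by rw [hU3W2]; exact hM3c) ?_ ?_
      · intro w hw
        rw [hs0] at hw
        have hwL : w ∉ L := (Finset.mem_sdiff.mp hw).2
        refine Finset.mem_filter.mpr ⟨Finset.mem_product.mpr ⟨?_, ?_⟩, ?_⟩
        · exact Finset.mem_sdiff.mpr ⟨Finset.mem_univ _,
            fun hww => hwL ((Finset.union_subset hU3L hW2L) hww)⟩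
        · exact Finset.mem_sdiff.mpr ⟨Finset.mem_univ _,
            fun hyy => (Finset.mem_union.mp hyy).elim hyU3 hyW2⟩
        · show w ≠ y
          exact fun h => hwL (h ▸ hyL)
      · intro w hw
        simp only [htau, hVV, if_pos hyM]
        abel
    · -- y ∈ Ur : use the pair (insert ystar (U1.erase y), W1)
      have hyU1 : y ∈ U1 := by rw [hU1]; exact Finset.mem_union_right _ hyUr
      have hyM : y ∉ M := (hUrf hyUr).2
      have hyWr : y ∉ Wr := fun h => (hWrf h).2 hyUr
      have hyW1 : y ∉ W1 := by
        rw [hW1]; exact fun h => (Finset.mem_union.mp h).elim hyM hyWr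
      have hyys : y ≠ ystar := fun h => hysUr (h ▸ hyUr)
      have hys_er : ystar ∉ U1.erase y := fun h => hysU1 (Finset.mem_of_mem_erase h)
      have hUpc : (insert ystar (U1.erase y)).card = d - 1 := by
        rw [Finset.card_insert_of_notMem hys_er, Finset.card_erase_of_mem hyU1, hU1c]
        have hpos : 0 < Ur.card := Finset.card_pos.mpr ⟨y, hyUr⟩
        rw [hUrc] at hpos; omega
      have hIc : ((insert ystar (U1.erase y)) ∩ W1).card = m := by
        have hEq : (insert ystar (U1.erase y)) ∩ W1 = M := by
          ext a
          simp only [Finset.mem_inter, Finset.mem_insert, Finset.mem_erase]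
          constructor
          · rintro ⟨h1 | ⟨h1a, h1b⟩, h2⟩
            · exact absurd (h1 ▸ h2) hysW1
            · have hmem : a ∈ U1 ∩ W1 := Finset.mem_inter.mpr ⟨h1b, h2⟩
              rw [hU1W1] at hmem; exact hmem
          · intro h
            have haU1 : a ∈ U1 := by rw [hU1]; exact Finset.mem_union_left _ h
            have haW1 : a ∈ W1 := by rw [hW1]; exact Finset.mem_union_left _ h
            exact ⟨Or.inr ⟨fun h' => hyM (h' ▸ h), haU1⟩, haW1⟩
        rw [hEq]; exact hMc
      have hUpL : insert ystar (U1.erase y) ⊆ L :=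
        Finset.insert_subset hysL (le_trans (Finset.erase_subset _ _) hU1L)
      refine key (insert ystar (U1.erase y)) W1 (∑ u ∈ insert ystar (U1.erase y), c s(u, y))
        (fun w => (y, w)) hUpc hW1c hIc ?_ ?_
      · intro w hw
        rw [hs0] at hw
        have hwL : w ∉ L := (Finset.mem_sdiff.mp hw).2
        refine Finset.mem_filter.mpr ⟨Finset.mem_product.mpr ⟨?_, ?_⟩, ?_⟩
        · refine Finset.mem_sdiff.mpr ⟨Finset.mem_univ _, fun hyy => ?_⟩
          rcases Finset.mem_union.mp hyy with h | h
          · rcases Finset.mem_insert.mp h with h' | h'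
            · exact hyys h'
            · exact (Finset.notMem_erase y U1) h'
          · exact hyW1 h
        · exact Finset.mem_sdiff.mpr ⟨Finset.mem_univ _,
            fun hww => hwL ((Finset.union_subset hUpL hW1L) hww)⟩
        · show y ≠ w
          exact fun h => hwL (h ▸ (hUrf hyUr).1)
      · intro w hw
        simp only [htau, hVV, if_neg hyM, if_pos hyUr]
        have hsw : s(y, w) = s(w, y) := Sym2.eq_swap
        rw [hsw]
        abel
    · -- y ∈ Wr : use the pair (U1, insert ystar (W1.erase y))
      have hyW1 : y ∈ W1 := by rw [hW1]; exact Finset.mem_union_right _ hyWr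
      have hyM : y ∉ M := (hWrf hyWr).1.2
      have hyUr : y ∉ Ur := (hWrf hyWr).2
      have hyU1 : y ∉ U1 := by
        rw [hU1]; exact fun h => (Finset.mem_union.mp h).elim hyM hyUr
      have hyys : y ≠ ystar := fun h => hysWr (h ▸ hyWr)
      have hys_er : ystar ∉ W1.erase y := fun h => hysW1 (Finset.mem_of_mem_erase h)
      have hWpc : (insert ystar (W1.erase y)).card = d' - 1 := by
        rw [Finset.card_insert_of_notMem hys_er, Finset.card_erase_of_mem hyW1, hW1c]
        have hpos : 0 < Wr.card := Finset.card_pos.mpr ⟨y, hyWr⟩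
        rw [hWrc] at hpos; omega
      have hIc : (U1 ∩ (insert ystar (W1.erase y))).card = m := by
        have hEq : U1 ∩ (insert ystar (W1.erase y)) = M := by
          ext a
          simp only [Finset.mem_inter, Finset.mem_insert, Finset.mem_erase]
          constructor
          · rintro ⟨h1, h2 | ⟨h2a, h2b⟩⟩
            · exact absurd (h2 ▸ h1) hysU1
            · have hmem : a ∈ U1 ∩ W1 := Finset.mem_inter.mpr ⟨h1, h2b⟩
              rw [hU1W1] at hmem; exact hmem
          · intro h
            have haU1 : a ∈ U1 := by rw [hU1]; exact Finset.mem_union_left _ h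
            have haW1 : a ∈ W1 := by rw [hW1]; exact Finset.mem_union_left _ h
            exact ⟨haU1, Or.inr ⟨fun h' => hyM (h' ▸ h), haW1⟩⟩
        rw [hEq]; exact hMc
      have hWpL : insert ystar (W1.erase y) ⊆ L :=
        Finset.insert_subset hysL (le_trans (Finset.erase_subset _ _) hW1L)
      refine key U1 (insert ystar (W1.erase y)) (∑ v ∈ insert ystar (W1.erase y), c s(v, y))
        (fun w => (w, y)) hU1c hWpc hIc ?_ ?_
      · intro w hw
        rw [hs0] at hw
        have hwL : w ∉ L := (Finset.mem_sdiff.mp hw).2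
        refine Finset.mem_filter.mpr ⟨Finset.mem_product.mpr ⟨?_, ?_⟩, ?_⟩
        · exact Finset.mem_sdiff.mpr ⟨Finset.mem_univ _,
            fun hww => hwL ((Finset.union_subset hU1L hWpL) hww)⟩
        · refine Finset.mem_sdiff.mpr ⟨Finset.mem_univ _, fun hyy => ?_⟩
          rcases Finset.mem_union.mp hyy with h | h
          · exact hyU1 h
          · rcases Finset.mem_insert.mp h with h' | h'
            · exact hyys h'
            · exact (Finset.notMem_erase y W1) h'
        · show w ≠ y
          exact fun h => hwL (h ▸ (hWrf hyWr).1.1)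
      · intro w hw
        simp only [htau, hVV, if_neg hyM, if_neg hyUr]
        abel
  by_cases hne : s0.Nonempty
  swap
  · refine htriv ?_
    have huniv : (Finset.univ : Finset X) ⊆ L := by
      intro x hx
      by_contra hxL
      exact hne ⟨x, by rw [hs0]; exact Finset.mem_sdiff.mpr ⟨hx, hxL⟩⟩
    calc Fintype.card X = (Finset.univ : Finset X).card := (Finset.card_univ).symm
      _ ≤ L.card := Finset.card_le_card huniv
      _ = d + d' := hL
  set F : X → (Γ ⧸ H') × (Γ ⧸ H') × (Γ ⧸ H') × ({z // z ∈ UW} → Γ ⧸ H') :=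
    fun w => (alf w, bet w, gam w, fun y => tau y.1 w) with hF
  set t0 : Finset ((Γ ⧸ H') × (Γ ⧸ H') × (Γ ⧸ H') × ({z // z ∈ UW} → Γ ⧸ H')) :=
    s0.image F with ht0
  have htne : t0.Nonempty := hne.image F
  obtain ⟨v0, hv0t, hv0max⟩ := Finset.exists_max_image t0
    (fun v => (s0.filter (fun w => F w = v)).card) htne
  obtain ⟨w0, hw0s, hw0⟩ := Finset.mem_image.mp hv0t
  set I : Finset X := s0.filter (fun w => F w = F w0) with hI
  have hcount : s0.card ≤ t0.card * I.card := by
    have h1 : s0.card = ∑ v ∈ t0, (s0.filter (fun w => F w = v)).card :=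
      Finset.card_eq_sum_card_fiberwise (fun x hx => Finset.mem_image_of_mem F hx)
    rw [h1]
    calc ∑ v ∈ t0, (s0.filter (fun w => F w = v)).card
        ≤ ∑ _v ∈ t0, I.card := Finset.sum_le_sum (fun v hv => by
          rw [hI, hw0]; exact hv0max v hv)
      _ = t0.card * I.card := by rw [Finset.sum_const, smul_eq_mul]
  have ht0card : t0.card ≤ (lam - 1) ^ (d + d') := by
    have hsub : t0 ⊆ (s0.image alf) ×ˢ ((s0.image bet) ×ˢ ((s0.image gam) ×ˢ
        (Fintype.piFinset (fun y : {z // z ∈ UW} => s0.image (tau y.1))))) := by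
      intro v hv
      obtain ⟨w, hw, rfl⟩ := Finset.mem_image.mp hv
      simp only [hF, Finset.mem_product, Fintype.mem_piFinset]
      exact ⟨Finset.mem_image_of_mem _ hw, Finset.mem_image_of_mem _ hw,
        Finset.mem_image_of_mem _ hw, fun y => Finset.mem_image_of_mem _ hw⟩
    have hP : (Fintype.piFinset (fun y : {z // z ∈ UW} => s0.image (tau y.1))).card
        ≤ (lam - 1) ^ (d + d' - 2 - m) := by
      rw [Fintype.card_piFinset]
      calc ∏ y : {z // z ∈ UW}, (s0.image (tau y.1)).card
          ≤ ∏ _y : {z // z ∈ UW}, (lam - 1) :=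
            Finset.prod_le_prod' (fun y _ => hτcard y.1 y.2)
        _ = (lam - 1) ^ (d + d' - 2 - m) := by
            rw [Finset.prod_const, Finset.card_univ, Fintype.card_coe, hUWc]
    have hchain : t0.card ≤ (s0.image alf).card * ((s0.image bet).card *
        ((s0.image gam).card *
          (Fintype.piFinset (fun y : {z // z ∈ UW} => s0.image (tau y.1))).card)) := by
      have := Finset.card_le_card hsub
      simpa [Finset.card_product] using this
    rcases Nat.eq_zero_or_pos m with hm0 | hm0
    · have hbound : t0.card ≤ (lam - 1) * ((lam - 1) * (1 * (lam - 1) ^ (d + d' - 2 - m))) :=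
        le_trans hchain (Nat.mul_le_mul hαcard (Nat.mul_le_mul hβcard
          (Nat.mul_le_mul (hγcard0 hm0) hP)))
      refine le_trans hbound (le_of_eq ?_)
      rw [one_mul, ← pow_succ', ← pow_succ']
      congr 1
      omega
    · have hbound : t0.card ≤ (lam - 1) * ((lam - 1) * ((lam - 1) * (lam - 1) ^ (d + d' - 2 - m))) :=
        le_trans hchain (Nat.mul_le_mul hαcard (Nat.mul_le_mul hβcard
          (Nat.mul_le_mul (hγcard1 (by omega)) hP)))
      refine le_trans hbound ?_
      rw [← pow_succ', ← pow_succ', ← pow_succ']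
      exact Nat.pow_le_pow_right (by omega) (by omega)
  have hXcount : Fintype.card X ≤ (I.card + d + d') * (lam - 1) ^ (d + d') := by
    have hs0c : s0.card = Fintype.card X - (d + d') := by
      rw [hs0, Finset.card_sdiff_of_subset (Finset.subset_univ L), Finset.card_univ, hL]
    have h2 : t0.card * I.card ≤ (lam - 1) ^ (d + d') * I.card :=
      Nat.mul_le_mul_right _ ht0card
    have h3 : Fintype.card X ≤ (lam - 1) ^ (d + d') * I.card + (d + d') := by omega
    have h4 : d + d' ≤ (d + d') * (lam - 1) ^ (d + d') :=
      Nat.le_mul_of_pos_right _ (Nat.pow_pos (by omega))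
    calc Fintype.card X ≤ (lam - 1) ^ (d + d') * I.card + (d + d') := h3
      _ ≤ (lam - 1) ^ (d + d') * I.card + (d + d') * (lam - 1) ^ (d + d') :=
          Nat.add_le_add_left h4 _
      _ = (I.card + d + d') * (lam - 1) ^ (d + d') := by ring
  have hIs0 : ∀ w ∈ I, w ∈ s0 := fun w hw => (Finset.mem_filter.mp hw).1
  have hw0I : w0 ∈ I := by rw [hI]; exact Finset.mem_filter.mpr ⟨hw0s, rfl⟩
  have hcomp : ∀ w ∈ I, alf w = alf w0 ∧ bet w = bet w0 ∧ gam w = gam w0 ∧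
      ∀ y ∈ UW, tau y w = tau y w0 := by
    intro w hw
    have h := (Finset.mem_filter.mp hw).2
    simp only [hF, Prod.mk.injEq] at h
    obtain ⟨h1, h2, h3, h4⟩ := h
    exact ⟨h1, h2, h3, fun y hy => congrFun h4 ⟨y, hy⟩⟩
  have hdiff : ∀ w ∈ I, ∀ y ∈ UW, c s(w, y) - c s(x0, w) = c s(w0, y) - c s(x0, w0) := by
    intro w hw y hy
    obtain ⟨h1, h2, h3, h4⟩ := hcomp w hw
    have ht := h4 y hy
    have hyLoc : y ∈ M ∨ y ∈ Ur ∨ y ∈ Wr := by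
      rw [hUW, hU1, hW1] at hy
      rcases Finset.mem_union.mp hy with h | h
      · rcases Finset.mem_union.mp h with h' | h'
        · exact Or.inl h'
        · exact Or.inr (Or.inl h')
      · rcases Finset.mem_union.mp h with h' | h'
        · exact Or.inl h'
        · exact Or.inr (Or.inr h')
    rcases hyLoc with hyM | hyUr | hyWr
    · have hm0 : m ≠ 0 := by
        intro h0
        rw [h0] at hMc
        rw [Finset.card_eq_zero.mp hMc] at hyM
        exact absurd hyM (Finset.notMem_empty _)
      have hgv : ∀ v : X, gam v = c s(x0, v) + ∑ u ∈ U3, c s(u, v) := by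
        intro v; rw [hgam]; simp only [if_neg hm0]
        exact Finset.sum_insert hx0U3
      have htv : ∀ v : X, tau y v = (∑ u ∈ U3, c s(u, v)) + c s(v, y) := by
        intro v; simp only [htau, hVV, if_pos hyM]
      have e1 : c s(w, y) - c s(x0, w) = tau y w - gam w := by
        rw [htv, hgv]; abel
      have e2 : c s(w0, y) - c s(x0, w0) = tau y w0 - gam w0 := by
        rw [htv, hgv]; abel
      rw [e1, e2, ht, h3]
    · have hyM : y ∉ M := (hUrf hyUr).2
      have htv : ∀ v : X, tau y v = (∑ u ∈ W1, c s(u, v)) + c s(v, y) := by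
        intro v; simp only [htau, hVV, if_neg hyM, if_pos hyUr]
      have hbv : ∀ v : X, bet v = c s(x0, v) + ∑ u ∈ W1, c s(u, v) := by
        intro v; rw [hbet]; exact Finset.sum_insert hx0W1
      have e1 : c s(w, y) - c s(x0, w) = tau y w - bet w := by rw [htv, hbv]; abel
      have e2 : c s(w0, y) - c s(x0, w0) = tau y w0 - bet w0 := by rw [htv, hbv]; abel
      rw [e1, e2, ht, h2]
    · have hyM : y ∉ M := (hWrf hyWr).1.2
      have hyUr : y ∉ Ur := (hWrf hyWr).2
      have htv : ∀ v : X, tau y v = (∑ u ∈ U1, c s(u, v)) + c s(v, y) := by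
        intro v; simp only [htau, hVV, if_neg hyM, if_neg hyUr]
      have hav : ∀ v : X, alf v = c s(x0, v) + ∑ u ∈ U1, c s(u, v) := by
        intro v; rw [half]; exact Finset.sum_insert hx0U1
      have e1 : c s(w, y) - c s(x0, w) = tau y w - alf w := by rw [htv, hav]; abel
      have e2 : c s(w0, y) - c s(x0, w0) = tau y w0 - alf w0 := by rw [htv, hav]; abel
      rw [e1, e2, ht, h1]
  have hΔd : ∀ w ∈ I, d • (c s(x0, w) - c s(x0, w0)) = 0 := by
    intro w hw
    obtain ⟨h1, -, -, -⟩ := hcomp w hw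
    have hterm : ∀ u ∈ U1, c s(u, w) - c s(u, w0) = c s(x0, w) - c s(x0, w0) := by
      intro u hu
      have hd0 := hdiff w hw u (by rw [hUW]; exact Finset.mem_union_left _ hu)
      have e1 : s(u, w) = s(w, u) := Sym2.eq_swap
      have e2 : s(u, w0) = s(w0, u) := Sym2.eq_swap
      rw [e1, e2]
      exact sub_eq_sub_iff_sub_eq_sub.mp hd0
    have hsum' : ∑ u ∈ U1, (c s(u, w) - c s(u, w0)) =
        U1.card • (c s(x0, w) - c s(x0, w0)) := by
      rw [Finset.sum_congr rfl hterm, Finset.sum_const]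
    have ea : alf w = c s(x0, w) + ∑ u ∈ U1, c s(u, w) := by
      rw [half]; exact Finset.sum_insert hx0U1
    have ea0 : alf w0 = c s(x0, w0) + ∑ u ∈ U1, c s(u, w0) := by
      rw [half]; exact Finset.sum_insert hx0U1
    have hz : (c s(x0, w) - c s(x0, w0)) + U1.card • (c s(x0, w) - c s(x0, w0)) = 0 := by
      have hcalc : alf w - alf w0 =
          (c s(x0, w) - c s(x0, w0)) + ∑ u ∈ U1, (c s(u, w) - c s(u, w0)) := by
        rw [ea, ea0, Finset.sum_sub_distrib]; abel
      rw [hsum'] at hcalc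
      rw [← hcalc, h1, sub_self]
    have hfin : (U1.card + 1) • (c s(x0, w) - c s(x0, w0)) = 0 := by
      rw [add_nsmul, one_nsmul, add_comm]; exact hz
    have hcard1 : U1.card + 1 = d := by rw [hU1c]; omega
    rw [← hcard1]; exact hfin
  have hΔd' : ∀ w ∈ I, d' • (c s(x0, w) - c s(x0, w0)) = 0 := by
    intro w hw
    obtain ⟨-, h2, -, -⟩ := hcomp w hw
    have hterm : ∀ u ∈ W1, c s(u, w) - c s(u, w0) = c s(x0, w) - c s(x0, w0) := by
      intro u hu
      have hd0 := hdiff w hw u (by rw [hUW]; exact Finset.mem_union_right _ hu)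
      have e1 : s(u, w) = s(w, u) := Sym2.eq_swap
      have e2 : s(u, w0) = s(w0, u) := Sym2.eq_swap
      rw [e1, e2]
      exact sub_eq_sub_iff_sub_eq_sub.mp hd0
    have hsum' : ∑ u ∈ W1, (c s(u, w) - c s(u, w0)) =
        W1.card • (c s(x0, w) - c s(x0, w0)) := by
      rw [Finset.sum_congr rfl hterm, Finset.sum_const]
    have ea : bet w = c s(x0, w) + ∑ u ∈ W1, c s(u, w) := by
      rw [hbet]; exact Finset.sum_insert hx0W1
    have ea0 : bet w0 = c s(x0, w0) + ∑ u ∈ W1, c s(u, w0) := by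
      rw [hbet]; exact Finset.sum_insert hx0W1
    have hz : (c s(x0, w) - c s(x0, w0)) + W1.card • (c s(x0, w) - c s(x0, w0)) = 0 := by
      have hcalc : bet w - bet w0 =
          (c s(x0, w) - c s(x0, w0)) + ∑ u ∈ W1, (c s(u, w) - c s(u, w0)) := by
        rw [ea, ea0, Finset.sum_sub_distrib]; abel
      rw [hsum'] at hcalc
      rw [← hcalc, h2, sub_self]
    have hfin : (W1.card + 1) • (c s(x0, w) - c s(x0, w0)) = 0 := by
      rw [add_nsmul, one_nsmul, add_comm]; exact hz
    have hcard1 : W1.card + 1 = d' := by rw [hW1c]; omega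
    rw [← hcard1]; exact hfin
  have hΔn : ∀ q : Γ ⧸ H', n • q = 0 := by
    intro q
    obtain ⟨g, hg⟩ : ∃ g : Γ, QuotientAddGroup.mk g = q := ⟨q.out, QuotientAddGroup.out_eq' q⟩
    have hng : n • g = 0 := by
      obtain ⟨k, hk⟩ := hΓ
      have hcg : Fintype.card Γ • g = 0 := card_nsmul_eq_zero
      calc n • g = k • (Fintype.card Γ • g) := by rw [hk, mul_nsmul]
        _ = 0 := by rw [hcg, smul_zero]
    have hmap : n • q = QuotientAddGroup.mk (n • g) := by
      rw [← hg]; exact (map_nsmul (QuotientAddGroup.mk' H') n g).symm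
    rw [hmap, hng]
    exact map_zero (QuotientAddGroup.mk' H')
  have hκtor : ∀ w ∈ I, κ • (c s(x0, w) - c s(x0, w0)) = 0 := by
    intro w hw
    have hdΔ : (d : ℤ) • (c s(x0, w) - c s(x0, w0)) = 0 := by
      rw [natCast_zsmul]; exact hΔd w hw
    have hd'Δ : (d' : ℤ) • (c s(x0, w) - c s(x0, w0)) = 0 := by
      rw [natCast_zsmul]; exact hΔd' w hw
    have hnΔ : (n : ℤ) • (c s(x0, w) - c s(x0, w0)) = 0 := by
      rw [natCast_zsmul]; exact hΔn _
    have hgcd1 : ((Nat.gcd d' n : ℕ) : ℤ) = d' * Nat.gcdA d' n + n * Nat.gcdB d' n :=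
      Nat.gcd_eq_gcd_ab d' n
    have hgcd2 : ((κ : ℕ) : ℤ) = d * Nat.gcdA d (Nat.gcd d' n) +
        (Nat.gcd d' n) * Nat.gcdB d (Nat.gcd d' n) := by
      rw [hκ]; exact Nat.gcd_eq_gcd_ab d (Nat.gcd d' n)
    have hz : ((κ : ℕ) : ℤ) • (c s(x0, w) - c s(x0, w0)) = 0 := by
      have e : ((κ : ℕ) : ℤ) = Nat.gcdA d (Nat.gcd d' n) * (d : ℤ) +
            ((Nat.gcdA d' n * Nat.gcdB d (Nat.gcd d' n)) * (d' : ℤ) +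
              (Nat.gcdB d' n * Nat.gcdB d (Nat.gcd d' n)) * (n : ℤ)) := by
        rw [hgcd2, hgcd1]; ring
      have t1 : (Nat.gcdA d (Nat.gcd d' n) * (d : ℤ)) • (c s(x0, w) - c s(x0, w0)) = 0 := by
        rw [mul_smul, hdΔ, smul_zero]
      have t2 : ((Nat.gcdA d' n * Nat.gcdB d (Nat.gcd d' n)) * (d' : ℤ)) •
          (c s(x0, w) - c s(x0, w0)) = 0 := by
        rw [mul_smul, hd'Δ, smul_zero]
      have t3 : ((Nat.gcdB d' n * Nat.gcdB d (Nat.gcd d' n)) * (n : ℤ)) •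
          (c s(x0, w) - c s(x0, w0)) = 0 := by
        rw [mul_smul, hnΔ, smul_zero]
      rw [e, add_smul, add_smul, t1, t2, t3]
      simp
    rw [← natCast_zsmul]; exact hz
  set CF : X → Γ := fun x => (c s(x0, x) - c s(x0, w0)).out with hCF
  set shift : Γ ⧸ H' := alf w0 + bet w0 - c s(x0, w0) - c s(x0, w0) with hshift
  set T : Finset (Γ ⧸ H') := ((((Finset.univ \ (U1 ∪ W1)) ×ˢ (Finset.univ \ (U1 ∪ W1))).filter
      (fun p : X × X => p.1 ≠ p.2)).image
      (fun p : X × X => (∑ u ∈ U1, c s(u, p.1)) + c s(p.1, p.2) + ∑ v ∈ W1, c s(v, p.2))) with hT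
  have hTcard : T.card ≤ lam - 1 := hc U1 W1 hU1c hW1c (by rw [hU1W1]; exact hMc)
  refine ⟨I, T.image (fun E => (E - shift).out), CF,
    le_trans Finset.card_image_le hTcard, hXcount, ?_, ?_⟩
  · intro x hx
    have hmkCF : QuotientAddGroup.mk (CF x) = c s(x0, x) - c s(x0, w0) := by
      rw [hCF]; exact QuotientAddGroup.out_eq' _
    have hmk0 : QuotientAddGroup.mk (κ • CF x) = (0 : Γ ⧸ H') := by
      have hmap : QuotientAddGroup.mk (κ • CF x) = κ • QuotientAddGroup.mk (CF x) :=
        map_nsmul (QuotientAddGroup.mk' H') κ (CF x)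
      rw [hmap, hmkCF]
      exact hκtor x hx
    exact (QuotientAddGroup.eq_zero_iff _).mp hmk0
  · intro x hx y hy hxy
    have hxs0 := hIs0 x hx
    have hys0 := hIs0 y hy
    rw [hs0] at hxs0 hys0
    have hxL : x ∉ L := (Finset.mem_sdiff.mp hxs0).2
    have hyL : y ∉ L := (Finset.mem_sdiff.mp hys0).2
    have hET : ((∑ u ∈ U1, c s(u, x)) + c s(x, y) + ∑ v ∈ W1, c s(v, y)) ∈ T := by
      rw [hT]
      refine Finset.mem_image.mpr ⟨(x, y), Finset.mem_filter.mpr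
        ⟨Finset.mem_product.mpr ⟨?_, ?_⟩, hxy⟩, rfl⟩
      · exact Finset.mem_sdiff.mpr ⟨Finset.mem_univ _,
          fun h => hxL ((Finset.union_subset hU1L hW1L) h)⟩
      · exact Finset.mem_sdiff.mpr ⟨Finset.mem_univ _,
          fun h => hyL ((Finset.union_subset hU1L hW1L) h)⟩
    refine ⟨((∑ u ∈ U1, c s(u, x)) + c s(x, y) + ∑ v ∈ W1, c s(v, y) - shift).out,
      Finset.mem_image_of_mem _ hET, ?_⟩
    have hsplit : (QuotientAddGroup.mk
        ((((∑ u ∈ U1, c s(u, x)) + c s(x, y) + ∑ v ∈ W1, c s(v, y) - shift).out) + CF x + CF y)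
        : Γ ⧸ H')
        = (QuotientAddGroup.mk (((∑ u ∈ U1, c s(u, x)) + c s(x, y) + ∑ v ∈ W1, c s(v, y)
            - shift).out) : Γ ⧸ H') + (QuotientAddGroup.mk (CF x) : Γ ⧸ H')
            + (QuotientAddGroup.mk (CF y) : Γ ⧸ H') := by
      rw [QuotientAddGroup.mk_add, QuotientAddGroup.mk_add]
    have hout1 : QuotientAddGroup.mk
        (((∑ u ∈ U1, c s(u, x)) + c s(x, y) + ∑ v ∈ W1, c s(v, y) - shift).out)
        = (∑ u ∈ U1, c s(u, x)) + c s(x, y) + ∑ v ∈ W1, c s(v, y) - shift :=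
      QuotientAddGroup.out_eq' _
    have houtx : QuotientAddGroup.mk (CF x) = c s(x0, x) - c s(x0, w0) := by
      rw [hCF]; exact QuotientAddGroup.out_eq' _
    have houty : QuotientAddGroup.mk (CF y) = c s(x0, y) - c s(x0, w0) := by
      rw [hCF]; exact QuotientAddGroup.out_eq' _
    have hαx : alf w0 = c s(x0, x) + ∑ u ∈ U1, c s(u, x) := by
      rw [← (hcomp x hx).1, half]; exact Finset.sum_insert hx0U1
    have hβy : bet w0 = c s(x0, y) + ∑ v ∈ W1, c s(v, y) := by
      rw [← (hcomp y hy).2.1, hbet]; exact Finset.sum_insert hx0W1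
    rw [hsplit, hout1, houtx, houty, hshift, hαx, hβy]
    abel
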